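/- Let C ≥ 1 and let A = (A_1, …, A_C) ∈ ℕ^C be available counts per category with total T := Σ_{c=1}^C A_c, and let K ≥ 1 be an integer budget. Call a count vector M = (M_1, …, M_C) ∈ ℕ^C feasible if either M = 0 or (M_c ≤ A_c for all c and Σ_c M_c ≥ K). Define φ(M) := (min_c M_c)/(Σ_c M_c) if Σ_c M_c > 0 and φ(0) := −1/C. Then the maximum of φ(M) over feasible M equals: (i) 1/C if C · min_c A_c ≥ K; (ii) −1/C if T < K (in which case M = 0 is the only feasible vector); and (iii) (min_c A_c)/K if T ≥ K and C · min_c A_c < K. -/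

import Mathlib

lemma exists_sum_eq_of_le {C : ℕ} (A : Fin C → ℕ) (L : ℕ) (h : L ≤ ∑ c, A c) :
    ∃ M : Fin C → ℕ, (∀ c, M c ≤ A c) ∧ ∑ c, M c = L := by
  induction L with
  | zero => exact ⟨0, fun c => Nat.zero_le _, by simp⟩
  | succ n ih =>
    obtain ⟨M, hM, hsum⟩ := ih (Nat.le_of_succ_le h)
    have hex : ∃ c, M c < A c := by
      by_contra hc
      push_neg at hc
      have : ∑ c, A c ≤ ∑ c, M c := Finset.sum_le_sum (fun c _ => hc c)
      omega
    obtain ⟨c, hc⟩ := hex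
    refine ⟨Function.update M c (M c + 1), ?_, ?_⟩
    · intro d
      by_cases hd : d = c
      · subst hd; simpa using hc
      · simpa [Function.update_of_ne hd] using hM d
    · rw [Finset.sum_update_of_mem (Finset.mem_univ c)]
      have h2 := Finset.add_sum_erase Finset.univ M (Finset.mem_univ c)
      rw [Finset.erase_eq] at h2
      omega

/-- Closed form for the optimal underrepresentation index over feasible count vectors.
`A c` is the available count in category `c`, `T` the total, `K ≥ 1` the budget.
A count vector `M` is feasible if `M = 0` or (`M ≤ A` coordinatewise and `∑ M ≥ K`).
The underrepresentation index is `φ M = (min_c M c)/(∑ M)` for `M ≠ 0` and `-1/C` for `M = 0`.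
Then the maximum of `φ` over feasible vectors is `1/C` when `C·min A ≥ K`; it is `-1/C` when
`T < K` (and then `0` is the only feasible vector); and it is `(min A)/K` when `T ≥ K` and
`C·min A < K`. -/
theorem stmt_6 (C : ℕ) (hC : 1 ≤ C) (A : Fin C → ℕ) (K : ℕ) (hK : 1 ≤ K)
    (T : ℕ) (hT : T = ∑ c, A c)
    (Feasible : (Fin C → ℕ) → Prop)
    (hFeas : ∀ M, Feasible M ↔ (M = 0 ∨ ((∀ c, M c ≤ A c) ∧ K ≤ ∑ c, M c)))
    (φ : (Fin C → ℕ) → ℝ)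
    (hφ : ∀ M, 0 < ∑ c, M c → φ M = ((sInf (Set.range M) : ℕ) : ℝ) / ((∑ c, M c : ℕ) : ℝ))
    (hφ0 : ∀ M : Fin C → ℕ, (∑ c, M c = 0) → φ M = -1 / C) :
    ((K ≤ C * sInf (Set.range A)) → IsGreatest (φ '' {M | Feasible M}) (1 / C)) ∧
    ((T < K) → (IsGreatest (φ '' {M | Feasible M}) (-1 / C) ∧ ∀ M, Feasible M → M = 0)) ∧
    ((K ≤ T ∧ C * sInf (Set.range A) < K) →
      IsGreatest (φ '' {M | Feasible M}) (((sInf (Set.range A) : ℕ) : ℝ) / (K : ℝ))) := by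
  haveI hne : Nonempty (Fin C) := Fin.pos_iff_nonempty.mp (by omega)
  set a := sInf (Set.range A) with ha
  have haA : ∀ c, a ≤ A c := fun c => Nat.sInf_le ⟨c, rfl⟩
  obtain ⟨c0, hc0⟩ : ∃ c, A c = a := Nat.sInf_mem (Set.range_nonempty A)
  have hCpos : (0:ℝ) < C := by exact_mod_cast (by omega : 0 < C)
  -- generic fact: min ≤ each coordinate
  have hminle : ∀ (M : Fin C → ℕ) (c : Fin C), sInf (Set.range M) ≤ M c :=
    fun M c => Nat.sInf_le ⟨c, rfl⟩
  refine ⟨?_, ?_, ?_⟩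
  · -- Case (i)
    intro hKCa
    have hapos : 0 < a := by
      rcases Nat.eq_zero_or_pos a with h0 | h0
      · rw [h0, Nat.mul_zero] at hKCa; omega
      · exact h0
    constructor
    · refine ⟨fun _ => a, ?_, ?_⟩
      · rw [Set.mem_setOf_eq, hFeas]
        refine Or.inr ⟨fun c => haA c, ?_⟩
        simpa [Finset.sum_const, Finset.card_univ, mul_comm] using hKCa
      · have hsum : ∑ _c : Fin C, a = C * a := by
          simp [Finset.sum_const, Finset.card_univ, mul_comm]
        rw [hφ _ (by rw [hsum]; positivity)]
        rw [hsum]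
        have hr : Set.range (fun _ : Fin C => a) = {a} := Set.range_const
        rw [hr, csInf_singleton]
        have hane : (a:ℝ) ≠ 0 := by exact_mod_cast hapos.ne'
        push_cast
        field_simp
    · rintro x ⟨M, hM, rfl⟩
      rw [Set.mem_setOf_eq, hFeas] at hM
      rcases hM with rfl | ⟨hMA, hMK⟩
      · rw [hφ0 _ (by simp)]
        have : (0:ℝ) < 1 / C := by positivity
        have : -1 / (C:ℝ) < 0 := by
          rw [neg_div]; linarith [one_div_pos.mpr hCpos]
        linarith [one_div_pos.mpr hCpos]
      · have hspos : 0 < ∑ c, M c := by omega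
        rw [hφ _ hspos]
        have hCm : C * sInf (Set.range M) ≤ ∑ c, M c := by
          calc C * sInf (Set.range M) = ∑ _c : Fin C, sInf (Set.range M) := by
                simp [Finset.sum_const, Finset.card_univ, mul_comm]
            _ ≤ ∑ c, M c := Finset.sum_le_sum (fun c _ => hminle M c)
        rw [div_le_div_iff₀ (by exact_mod_cast hspos) hCpos]
        have hCm' : ((C * sInf (Set.range M) : ℕ) : ℝ) ≤ ((∑ c, M c : ℕ) : ℝ) := by
          exact_mod_cast hCm
        push_cast at hCm' ⊢
        linarith
  · -- Case (ii)
    intro hTK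
    have hzero : ∀ M, Feasible M → M = 0 := by
      intro M hM
      rw [hFeas] at hM
      rcases hM with rfl | ⟨hMA, hMK⟩
      · rfl
      · exfalso
        have : ∑ c, M c ≤ ∑ c, A c := Finset.sum_le_sum (fun c _ => hMA c)
        omega
    refine ⟨⟨⟨0, (hFeas 0).mpr (Or.inl rfl), hφ0 _ (by simp)⟩, ?_⟩, hzero⟩
    rintro x ⟨M, hM, rfl⟩
    rw [hzero M hM, hφ0 _ (by simp)]
  · -- Case (iii)
    rintro ⟨hKT, hCaK⟩
    constructor
    · -- construct optimal M
      have hle : K - C * a ≤ ∑ c, (A c - a) := by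
        have h1 : ∑ c, (A c - a + a) = ∑ c, A c :=
          Finset.sum_congr rfl (fun c _ => by have := haA c; omega)
        have h2 : ∑ c, (A c - a + a) = (∑ c, (A c - a)) + C * a := by
          rw [Finset.sum_add_distrib]
          simp [Finset.sum_const, Finset.card_univ, mul_comm]
        omega
      obtain ⟨M', hM'A, hM'sum⟩ := exists_sum_eq_of_le _ _ hle
      set M : Fin C → ℕ := fun c => M' c + a with hMdef
      have hMA : ∀ c, M c ≤ A c := by
        intro c; have := hM'A c; have := haA c; simp only [hMdef]; omega
      have hMsum : ∑ c, M c = K := by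
        simp only [hMdef]
        rw [Finset.sum_add_distrib]
        simp only [Finset.sum_const, Finset.card_univ, Fintype.card_fin, smul_eq_mul]
        omega
      have hMc0 : M c0 = a := by
        have := hM'A c0
        simp only [hMdef]
        omega
      have hMinf : sInf (Set.range M) = a := by
        refine le_antisymm (hMc0 ▸ hminle M c0) ?_
        refine le_csInf (Set.range_nonempty M) ?_
        rintro b ⟨c, rfl⟩
        simp only [hMdef]
        omega
      refine ⟨M, ?_, ?_⟩
      · rw [Set.mem_setOf_eq, hFeas]
        exact Or.inr ⟨hMA, by omega⟩
      · rw [hφ _ (by omega), hMinf, hMsum]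
    · rintro x ⟨M, hM, rfl⟩
      rw [Set.mem_setOf_eq, hFeas] at hM
      have haKnn : (0:ℝ) ≤ ((a:ℕ):ℝ) / K := by positivity
      rcases hM with rfl | ⟨hMA, hMK⟩
      · rw [hφ0 _ (by simp)]
        have : -1 / (C:ℝ) ≤ 0 := by
          rw [neg_div]; linarith [one_div_pos.mpr hCpos]
        linarith
      · have hspos : 0 < ∑ c, M c := by omega
        rw [hφ _ hspos]
        have h1 : sInf (Set.range M) ≤ a := by
          have := hminle M c0
          have := hMA c0
          omega
        refine div_le_div₀ (by positivity) (by exact_mod_cast h1)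
          (by exact_mod_cast hK) (by exact_mod_cast hMK)
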